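/- Let G be a subgraph of the complete bipartite graph K_{7,30} with parts X (of size 7) and Y (of size 30) such that G contains no copy of K_{2,2}. If the maximum degree over the vertices of X equals 9, then the bipartite complement of G contains a copy of K_{5,5}. -/

import Mathlib

/-- A subgraph of the complete bipartite graph `K_{m,n}` is identified with its
edge set, a finset of pairs `(x, y)` with `x` in the part `X = Fin m` and
`y` in the part `Y = Fin n`.  `bContains s t E` says that the bipartite graph
with edge set `E` contains a copy of `K_{s,t}`: there are `s` distinct
vertices of `X` and `t` distinct vertices of `Y` with all pairs present. -/
def bContains {m n : ℕ} (s t : ℕ) (E : Finset (Fin m × Fin n)) : Prop :=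
  ∃ (A : Finset (Fin m)) (B : Finset (Fin n)),
    A.card = s ∧ B.card = t ∧ ∀ x ∈ A, ∀ y ∈ B, (x, y) ∈ E

/-- The bipartite complement: edge set `(X × Y) \ E`. -/
def bCompl {m n : ℕ} (E : Finset (Fin m × Fin n)) : Finset (Fin m × Fin n) :=
  Finset.univ \ E

/-- The neighborhood `N_G(x) ⊆ Y` of a vertex `x ∈ X`. -/
def bNbhd {m n : ℕ} (E : Finset (Fin m × Fin n)) (x : Fin m) : Finset (Fin n) :=
  Finset.univ.filter (fun y => (x, y) ∈ E)

/-- The degree of a vertex `x ∈ X`. -/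
def bDeg {m n : ℕ} (E : Finset (Fin m × Fin n)) (x : Fin m) : ℕ :=
  (bNbhd E x).card

/-- `Δ(G_X)`: the maximum degree over the vertices of the part `X`. -/
def bMaxDegX {m n : ℕ} (E : Finset (Fin m × Fin n)) : ℕ :=
  Finset.univ.sup (fun x => bDeg E x)

open Finset

/-- The neighborhood of a vertex `y ∈ Y` in the part `X`. -/
def nbX {m n : ℕ} (E : Finset (Fin m × Fin n)) (y : Fin n) : Finset (Fin m) :=
  Finset.univ.filter (fun x => (x, y) ∈ E)

lemma k22 {m n : ℕ} {E : Finset (Fin m × Fin n)} (hK : ¬ bContains 2 2 E)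
    {x x' : Fin m} {y y' : Fin n} (hx : x ≠ x') (hy : y ≠ y')
    (h1 : (x, y) ∈ E) (h2 : (x, y') ∈ E) (h3 : (x', y) ∈ E) (h4 : (x', y') ∈ E) : False := by
  apply hK
  refine ⟨{x, x'}, {y, y'}, Finset.card_pair hx, Finset.card_pair hy, ?_⟩
  intro a ha b hb
  simp only [Finset.mem_insert, Finset.mem_singleton] at ha hb
  rcases ha with rfl | rfl <;> rcases hb with rfl | rfl <;> assumption

theorem stmt_11 (E : Finset (Fin 7 × Fin 30))
    (hK : ¬ bContains 2 2 E) (hΔ : bMaxDegX E = 9) :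
    bContains 5 5 (bCompl E) := by
  classical
  obtain ⟨x0, -, hx0⟩ :=
    Finset.exists_mem_eq_sup (Finset.univ : Finset (Fin 7)) ⟨0, mem_univ 0⟩ (bDeg E)
  rw [bMaxDegX] at hΔ
  rw [hΔ] at hx0
  set Y' := bNbhd E x0 with hY'def
  have hY'card : Y'.card = 9 := hx0.symm
  have hmemY' : ∀ y, y ∈ Y' ↔ (x0, y) ∈ E := by
    intro y; simp [hY'def, bNbhd]
  have hnbX : ∀ y x, x ∈ nbX E y ↔ (x, y) ∈ E := by
    intro y x; simp [nbX]
  -- count of pairs avoiding x0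
  have hpairs : (Finset.univ.filter
      (fun p : Fin 7 × Fin 7 => p.1 < p.2 ∧ p.1 ≠ x0 ∧ p.2 ≠ x0)).card = 15 := by
    have : ∀ z : Fin 7, (Finset.univ.filter
        (fun p : Fin 7 × Fin 7 => p.1 < p.2 ∧ p.1 ≠ z ∧ p.2 ≠ z)).card = 15 := by decide
    exact this x0
  -- there is a vertex y ∉ Y' of degree ≤ 1
  have hystar : ∃ y : Fin 30, y ∉ Y' ∧ (nbX E y).card ≤ 1 := by
    by_contra hcon
    push_neg at hcon
    set g : Fin 30 → Fin 7 × Fin 7 := fun y =>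
      if h : (nbX E y).Nonempty then ((nbX E y).min' h, (nbX E y).max' h) else (x0, x0) with hg
    have hle : (Finset.univ \ Y').card ≤ (Finset.univ.filter
        (fun p : Fin 7 × Fin 7 => p.1 < p.2 ∧ p.1 ≠ x0 ∧ p.2 ≠ x0)).card := by
      apply Finset.card_le_card_of_injOn g
      · intro y hy
        rw [mem_coe, mem_sdiff] at hy
        have h2 : 1 < (nbX E y).card := hcon y hy.2
        have hne : (nbX E y).Nonempty := Finset.card_pos.mp (by omega)
        have hlt : (nbX E y).min' hne < (nbX E y).max' hne :=
          Finset.min'_lt_max'_of_card _ h2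
        have hmin : ((nbX E y).min' hne, y) ∈ E := (hnbX y _).mp ((nbX E y).min'_mem hne)
        have hmax : ((nbX E y).max' hne, y) ∈ E := (hnbX y _).mp ((nbX E y).max'_mem hne)
        simp only [hg, dif_pos hne, mem_coe, mem_filter, mem_univ, true_and]
        refine ⟨hlt, ?_, ?_⟩
        · intro hEq; exact hy.2 ((hmemY' y).mpr (hEq ▸ hmin))
        · intro hEq; exact hy.2 ((hmemY' y).mpr (hEq ▸ hmax))
      · intro y1 hy1 y2 hy2 heq
        by_contra hne12
        simp only [coe_sdiff, Set.mem_diff, mem_coe, mem_sdiff] at hy1 hy2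
        have h21 : 1 < (nbX E y1).card := hcon y1 hy1.2
        have h22 : 1 < (nbX E y2).card := hcon y2 hy2.2
        have hne1 : (nbX E y1).Nonempty := Finset.card_pos.mp (by omega)
        have hne2 : (nbX E y2).Nonempty := Finset.card_pos.mp (by omega)
        simp only [hg, dif_pos hne1, dif_pos hne2, Prod.mk.injEq] at heq
        have hlt : (nbX E y1).min' hne1 < (nbX E y1).max' hne1 :=
          Finset.min'_lt_max'_of_card _ h21
        exact k22 hK hlt.ne hne12
          ((hnbX y1 _).mp ((nbX E y1).min'_mem hne1))
          ((hnbX y2 _).mp (heq.1 ▸ (nbX E y2).min'_mem hne2))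
          ((hnbX y1 _).mp ((nbX E y1).max'_mem hne1))
          ((hnbX y2 _).mp (heq.2 ▸ (nbX E y2).max'_mem hne2))
    rw [hpairs, card_sdiff_of_subset (subset_univ _), hY'card] at hle
    simp at hle
  obtain ⟨ys, hysY', hysdeg⟩ := hystar
  -- choose v : the unique possible neighbor of ys, with v ≠ x0
  obtain ⟨v, hvx0, hv⟩ : ∃ v : Fin 7, v ≠ x0 ∧ ∀ x, (x, ys) ∈ E → x = v := by
    rcases (nbX E ys).eq_empty_or_nonempty with he | hne
    · refine ⟨if x0 = 0 then 1 else 0, ?_, ?_⟩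
      · split_ifs with h
        · rw [h]; decide
        · exact Ne.symm h
      · intro x hx
        exact absurd ((hnbX ys x).mpr hx) (by simp [he])
    · refine ⟨(nbX E ys).min' hne, ?_, ?_⟩
      · intro hEq
        have := (hnbX ys _).mp ((nbX E ys).min'_mem hne)
        rw [hEq] at this
        exact hysY' ((hmemY' ys).mpr this)
      · intro x hx
        exact Finset.card_le_one.mp hysdeg x ((hnbX ys x).mpr hx) _ ((nbX E ys).min'_mem hne)
  -- the set of edges from X \ {x0} into Y'
  set F : Finset (Fin 7 × Fin 30) :=
    Finset.univ.filter (fun p => p.1 ≠ x0 ∧ p.2 ∈ Y' ∧ p ∈ E) with hFdef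
  have hFmem : ∀ p : Fin 7 × Fin 30, p ∈ F ↔ p.1 ≠ x0 ∧ p.2 ∈ Y' ∧ p ∈ E := by
    intro p; simp [hFdef]
  have hFinj : Set.InjOn Prod.fst (F : Set (Fin 7 × Fin 30)) := by
    intro p hp q hq hpq
    rw [mem_coe, hFmem] at hp hq
    by_contra hne
    have hsnd : p.2 ≠ q.2 := fun h => hne (Prod.ext hpq h)
    have hp2 : (p.1, p.2) ∈ E := hp.2.2
    have hq2 : (q.1, q.2) ∈ E := hq.2.2
    rw [← hpq] at hq2
    exact k22 hK (Ne.symm hp.1) hsnd ((hmemY' p.2).mp hp.2.1) ((hmemY' q.2).mp hq.2.1) hp2 hq2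
  have hFcard : F.card ≤ 6 := by
    have := Finset.card_le_card_of_injOn Prod.fst
      (fun p hp => (by
        rw [mem_coe, hFmem] at hp
        exact Finset.mem_erase.mpr ⟨hp.1, mem_univ _⟩ :
          p.1 ∈ Finset.univ.erase x0)) hFinj
    simpa using this
  set C : Finset (Fin 30) := F.image Prod.snd with hCdef
  have hCsub : C ⊆ Y' := by
    intro y hy
    rw [hCdef, mem_image] at hy
    obtain ⟨p, hpF, hpy⟩ := hy
    rw [hFmem] at hpF
    exact hpy ▸ hpF.2.1
  have hCcard : C.card ≤ 6 := le_trans Finset.card_image_le hFcard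
  set S : Finset (Fin 30) := Y' \ C with hSdef
  have hScard : S.card = 9 - C.card := by rw [hSdef, card_sdiff_of_subset hCsub, hY'card]
  have hSprop : ∀ y ∈ S, ∀ x, (x, y) ∈ E → x = x0 := by
    intro y hy x hxE
    by_contra hne
    rw [hSdef, mem_sdiff] at hy
    exact hy.2 (by
      rw [hCdef, mem_image]
      exact ⟨(x, y), (hFmem _).mpr ⟨hne, hy.1, hxE⟩, rfl⟩)
  have hSsub : S ⊆ Y' := sdiff_subset
  -- main claim : a set B of 5 vertices all of whose neighbors are in {x0, v}
  have hmain : ∃ B : Finset (Fin 30), B.card = 5 ∧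
      ∀ y ∈ B, ∀ x, (x, y) ∈ E → x = x0 ∨ x = v := by
    by_cases h4 : 4 ≤ S.card
    · obtain ⟨S4, hS4sub, hS4card⟩ := Finset.exists_subset_card_eq h4
      have hysnot : ys ∉ S4 := fun h => hysY' (hSsub (hS4sub h))
      refine ⟨insert ys S4, ?_, ?_⟩
      · rw [Finset.card_insert_of_notMem hysnot, hS4card]
      · intro y hy x hxE
        rcases Finset.mem_insert.mp hy with rfl | hyS4
        · exact Or.inr (hv x hxE)
        · exact Or.inl (hSprop y (hS4sub hyS4) x hxE)
    · -- S.card = 3, C.card = 6, F.card = 6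
      have hC6 : C.card = 6 := by omega
      have hF6 : F.card = 6 := by
        have := Finset.card_image_le (s := F) (f := Prod.snd)
        rw [← hCdef] at this
        omega
      -- image of Prod.fst is all of univ.erase x0
      have himg : F.image Prod.fst = Finset.univ.erase x0 := by
        apply Finset.eq_of_subset_of_card_le
        · intro x hx
          rw [mem_image] at hx
          obtain ⟨p, hpF, hpx⟩ := hx
          rw [hFmem] at hpF
          exact Finset.mem_erase.mpr ⟨hpx ▸ hpF.1, mem_univ _⟩
        · rw [Finset.card_image_of_injOn hFinj, hF6]
          simp
      -- fibers of Prod.snd on F all have exactly one element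
      have hfib : ∀ y ∈ C, (F.filter (fun p => p.2 = y)).card = 1 := by
        have hsum : F.card = ∑ y ∈ C, (F.filter (fun p => p.2 = y)).card :=
          Finset.card_eq_sum_card_fiberwise (fun p hp => by
            rw [hCdef, mem_coe, mem_image]; exact ⟨p, hp, rfl⟩)
        have hone : ∀ y ∈ C, 1 ≤ (F.filter (fun p => p.2 = y)).card := by
          intro y hy
          rw [hCdef, mem_image] at hy
          obtain ⟨p, hpF, hpy⟩ := hy
          exact Finset.card_pos.mpr ⟨p, Finset.mem_filter.mpr ⟨hpF, hpy⟩⟩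
        have heq : ∑ y ∈ C, (1 : ℕ) = ∑ y ∈ C, (F.filter (fun p => p.2 = y)).card := by
          rw [← hsum, Finset.sum_const, smul_eq_mul, mul_one, hC6, hF6]
        intro y hy
        exact ((Finset.sum_eq_sum_iff_of_le hone).mp heq y hy).symm
      -- find the vertex y_v matched only with v
      have hvmem : v ∈ F.image Prod.fst := by
        rw [himg]; exact Finset.mem_erase.mpr ⟨hvx0, mem_univ _⟩
      rw [mem_image] at hvmem
      obtain ⟨p, hpF, hpv⟩ := hvmem
      set yv := p.2 with hyvdef
      have hyvC : yv ∈ C := by rw [hCdef, mem_image]; exact ⟨p, hpF, rfl⟩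
      have hyvY' : yv ∈ Y' := hCsub hyvC
      have hyvprop : ∀ x, x ≠ x0 → (x, yv) ∈ E → x = v := by
        intro x hxne hxE
        have hmem : (x, yv) ∈ F.filter (fun p => p.2 = yv) :=
          Finset.mem_filter.mpr ⟨(hFmem _).mpr ⟨hxne, hyvY', hxE⟩, rfl⟩
        have hpmem : p ∈ F.filter (fun p => p.2 = yv) :=
          Finset.mem_filter.mpr ⟨hpF, rfl⟩
        have := Finset.card_le_one.mp (le_of_eq (hfib yv hyvC)) _ hmem _ hpmem
        rw [← hpv]
        exact congrArg Prod.fst this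
      -- build B
      have hS3 : S.card = 3 := by omega
      have hyvS : yv ∉ S := by
        rw [hSdef, mem_sdiff]; push_neg; intro _; exact hyvC
      have hysins : ys ∉ insert yv S := by
        intro h
        rcases Finset.mem_insert.mp h with rfl | hyS
        · exact hysY' hyvY'
        · exact hysY' (hSsub hyS)
      refine ⟨insert ys (insert yv S), ?_, ?_⟩
      · rw [Finset.card_insert_of_notMem hysins, Finset.card_insert_of_notMem hyvS, hS3]
      · intro y hy x hxE
        rcases Finset.mem_insert.mp hy with rfl | hy'
        · exact Or.inr (hv x hxE)
        · rcases Finset.mem_insert.mp hy' with rfl | hyS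
          · by_cases hxx0 : x = x0
            · exact Or.inl hxx0
            · exact Or.inr (hyvprop x hxx0 hxE)
          · exact Or.inl (hSprop y hyS x hxE)
  obtain ⟨B, hBcard, hBprop⟩ := hmain
  refine ⟨Finset.univ \ {x0, v}, B, ?_, hBcard, ?_⟩
  · rw [card_sdiff_of_subset (subset_univ _), Finset.card_pair (Ne.symm hvx0)]
    simp
  · intro x hx y hy
    rw [bCompl, mem_sdiff]
    refine ⟨mem_univ _, fun hE => ?_⟩
    rw [mem_sdiff, Finset.mem_insert, Finset.mem_singleton] at hx
    rcases hBprop y hy x hE with rfl | rfl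
    · exact hx.2 (Or.inl rfl)
    · exact hx.2 (Or.inr rfl)
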